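/- Let n ≥ 1, let L be an n×n real matrix, and for h ∈ ℝ set D(h) = I − h·L. Then as h → 0, det(D(h)) = ∏_{k} D(h)[k,k] − Σ_{unordered pairs {i,j}, i ≠ j} D(h)[i,j]·D(h)[j,i]·∏_{l ∉ {i,j}} D(h)[l,l] + O(h³); that is, the determinant of D(h) equals the product of its diagonal entries minus the sum over all unordered pairs of distinct indices of the corresponding transposition terms, up to an error which is O(h³) as h → 0. -/

import Mathlib

open Asymptotics Finset

section aux

open Equiv

private lemma pair_term_aux (n : ℕ) (M : Matrix (Fin n) (Fin n) ℝ) (a b : Fin n) (hab : a ≠ b) :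
    ((Perm.sign (swap a b) : ℤ) : ℝ) * ∏ i, M (swap a b i) i
      = -(M a b * M b a * ∏ l ∈ univ.filter (fun l => l ≠ a ∧ l ≠ b), M l l) := by
  rw [Perm.sign_swap hab]
  rw [← Finset.prod_filter_mul_prod_filter_not univ (fun l => l ≠ a ∧ l ≠ b)
      (fun i => M (swap a b i) i)]
  have h1 : ∏ l ∈ univ.filter (fun l => l ≠ a ∧ l ≠ b), M (swap a b l) l
      = ∏ l ∈ univ.filter (fun l => l ≠ a ∧ l ≠ b), M l l :=
    Finset.prod_congr rfl fun l hl => by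
      simp only [mem_filter, mem_univ, true_and] at hl
      rw [swap_apply_of_ne_of_ne hl.1 hl.2]
  have h2 : univ.filter (fun l : Fin n => ¬(l ≠ a ∧ l ≠ b)) = {a, b} := by
    ext l
    simp only [mem_filter, mem_univ, true_and, not_and_or, not_not, mem_insert,
      mem_singleton, not_ne_iff]
  rw [h1, h2, Finset.prod_pair hab, swap_apply_left, swap_apply_right]
  push_cast
  ring

private lemma swap_sum_aux (n : ℕ) (M : Matrix (Fin n) (Fin n) ℝ) :
    ∑ σ ∈ univ.filter (fun σ : Perm (Fin n) => σ.support.card = 2),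
        ((Perm.sign σ : ℤ) : ℝ) * ∏ i, M (σ i) i
      = -∑ p ∈ univ.filter (fun p : Fin n × Fin n => p.1 < p.2),
          M p.1 p.2 * M p.2 p.1 * ∏ l ∈ univ.filter (fun l => l ≠ p.1 ∧ l ≠ p.2), M l l := by
  rw [← Finset.sum_neg_distrib]
  refine (Finset.sum_bij (fun p _ => swap p.1 p.2) ?_ ?_ ?_ ?_).symm
  · intro p hp
    simp only [mem_filter, mem_univ, true_and] at hp ⊢
    exact Perm.card_support_eq_two.mpr ⟨p.1, p.2, ne_of_lt hp, rfl⟩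
  · intro p hp q hq h
    simp only [mem_filter, mem_univ, true_and] at hp hq
    have e1 : (swap q.1 q.2) p.1 = p.2 := by rw [← h]; exact swap_apply_left _ _
    by_cases c1 : p.1 = q.1
    · have c2 : p.2 = q.2 := by rw [c1, swap_apply_left] at e1; exact e1.symm
      exact Prod.ext c1 c2
    by_cases c2 : p.1 = q.2
    · have c3 : p.2 = q.1 := by rw [c2, swap_apply_right] at e1; exact e1.symm
      exfalso
      have hq21 : q.2 < q.1 := by rw [← c2, ← c3]; exact hp
      exact lt_asymm hq21 hq
    · rw [swap_apply_of_ne_of_ne c1 c2] at e1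
      exact absurd e1 (ne_of_lt hp)
  · intro σ hσ
    simp only [mem_filter, mem_univ, true_and] at hσ
    obtain ⟨x, y, hxy, rfl⟩ := Perm.card_support_eq_two.mp hσ
    rcases lt_or_gt_of_ne hxy with hlt | hlt
    · exact ⟨(x, y), by simpa using hlt, rfl⟩
    · exact ⟨(y, x), by simpa using hlt, by rw [swap_comm]⟩
  · intro p hp
    simp only [mem_filter, mem_univ, true_and] at hp
    exact (pair_term_aux n M p.1 p.2 (ne_of_lt hp)).symm

private lemma det_split_aux (n : ℕ) (M : Matrix (Fin n) (Fin n) ℝ) :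
    M.det -
      (∏ k, M k k -
        ∑ p ∈ univ.filter (fun p : Fin n × Fin n => p.1 < p.2),
          M p.1 p.2 * M p.2 p.1 * ∏ l ∈ univ.filter (fun l => l ≠ p.1 ∧ l ≠ p.2), M l l)
    = ∑ σ ∈ univ.filter (fun σ : Perm (Fin n) => 3 ≤ σ.support.card),
        ((Perm.sign σ : ℤ) : ℝ) * ∏ i, M (σ i) i := by
  rw [Matrix.det_apply']
  rw [← Finset.sum_filter_add_sum_filter_not univ (fun σ : Perm (Fin n) => 3 ≤ σ.support.card)]
  have hset : univ.filter (fun σ : Perm (Fin n) => ¬3 ≤ σ.support.card)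
      = insert 1 (univ.filter fun σ : Perm (Fin n) => σ.support.card = 2) := by
    ext σ
    simp only [mem_filter, mem_univ, true_and, mem_insert, not_le]
    constructor
    · intro hc
      by_cases h1 : σ = 1
      · exact Or.inl h1
      · exact Or.inr (by have := Perm.one_lt_card_support_of_ne_one h1; omega)
    · rintro (rfl | h)
      · simp
      · omega
  have hnot : (1 : Perm (Fin n)) ∉ univ.filter (fun σ : Perm (Fin n) => σ.support.card = 2) := by
    simp
  rw [hset, Finset.sum_insert hnot, swap_sum_aux]
  simp only [Perm.sign_one, Units.val_one, Int.cast_one, one_mul, Perm.one_apply]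
  ring

private lemma prod_entry_eq_aux (n : ℕ) (L : Matrix (Fin n) (Fin n) ℝ) (h : ℝ) (σ : Perm (Fin n))
    (hσ : 3 ≤ σ.support.card) :
    ∏ i, (1 - h • L : Matrix (Fin n) (Fin n) ℝ) (σ i) i
      = h ^ 3 * ((-1) ^ σ.support.card * h ^ (σ.support.card - 3) *
          (∏ i ∈ σ.support, L (σ i) i) * ∏ i ∈ σ.supportᶜ, (1 - h * L i i)) := by
  have entry_eq : ∀ a b : Fin n,
      (1 - h • L : Matrix (Fin n) (Fin n) ℝ) a b = (if a = b then 1 else 0) - h * L a b := by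
    intro a b
    simp [Matrix.sub_apply, Matrix.smul_apply, Matrix.one_apply, smul_eq_mul]
  rw [← Finset.prod_mul_prod_compl σ.support
      (fun i => (1 - h • L : Matrix (Fin n) (Fin n) ℝ) (σ i) i)]
  have h1 : ∏ i ∈ σ.support, (1 - h • L : Matrix (Fin n) (Fin n) ℝ) (σ i) i
      = ∏ i ∈ σ.support, (-h * L (σ i) i) := by
    refine Finset.prod_congr rfl fun i hi => ?_
    rw [entry_eq, if_neg (Perm.mem_support.mp hi)]
    ring
  have h2 : ∏ i ∈ σ.supportᶜ, (1 - h • L : Matrix (Fin n) (Fin n) ℝ) (σ i) i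
      = ∏ i ∈ σ.supportᶜ, (1 - h * L i i) := by
    refine Finset.prod_congr rfl fun i hi => ?_
    have hfix : σ i = i := Perm.notMem_support.mp (Finset.mem_compl.mp hi)
    rw [hfix, entry_eq, if_pos rfl]
  rw [h1, h2, Finset.prod_mul_distrib, Finset.prod_const]
  have h3 : (-h) ^ σ.support.card = (-1) ^ σ.support.card * (h ^ 3 * h ^ (σ.support.card - 3)) := by
    rw [← pow_add, Nat.add_sub_cancel' hσ, neg_pow]
  rw [h3]; ring

end aux

theorem stmt_2 (n : ℕ) (hn : 1 ≤ n) (L : Matrix (Fin n) (Fin n) ℝ) :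
    (fun h : ℝ =>
        ((1 - h • L : Matrix (Fin n) (Fin n) ℝ).det -
          (∏ k, (1 - h • L : Matrix (Fin n) (Fin n) ℝ) k k -
            ∑ p ∈ univ.filter (fun p : Fin n × Fin n => p.1 < p.2),
              (1 - h • L : Matrix (Fin n) (Fin n) ℝ) p.1 p.2 *
                (1 - h • L : Matrix (Fin n) (Fin n) ℝ) p.2 p.1 *
                ∏ l ∈ univ.filter (fun l => l ≠ p.1 ∧ l ≠ p.2),
                  (1 - h • L : Matrix (Fin n) (Fin n) ℝ) l l)))
      =O[nhds (0 : ℝ)] fun h : ℝ => h ^ 3 := by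
  set g : ℝ → ℝ := fun h =>
    ∑ σ ∈ univ.filter (fun σ : Equiv.Perm (Fin n) => 3 ≤ σ.support.card),
      ((Equiv.Perm.sign σ : ℤ) : ℝ) *
        ((-1) ^ σ.support.card * h ^ (σ.support.card - 3) *
          (∏ i ∈ σ.support, L (σ i) i) * ∏ i ∈ σ.supportᶜ, (1 - h * L i i)) with hg_def
  have hfun : (fun h : ℝ =>
        ((1 - h • L : Matrix (Fin n) (Fin n) ℝ).det -
          (∏ k, (1 - h • L : Matrix (Fin n) (Fin n) ℝ) k k -
            ∑ p ∈ univ.filter (fun p : Fin n × Fin n => p.1 < p.2),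
              (1 - h • L : Matrix (Fin n) (Fin n) ℝ) p.1 p.2 *
                (1 - h • L : Matrix (Fin n) (Fin n) ℝ) p.2 p.1 *
                ∏ l ∈ univ.filter (fun l => l ≠ p.1 ∧ l ≠ p.2),
                  (1 - h • L : Matrix (Fin n) (Fin n) ℝ) l l)))
      = fun h : ℝ => h ^ 3 * g h := by
    funext h
    rw [det_split_aux, hg_def, Finset.mul_sum]
    refine Finset.sum_congr rfl fun σ hσ => ?_
    simp only [mem_filter, mem_univ, true_and] at hσ
    rw [prod_entry_eq_aux n L h σ hσ]
    ring
  rw [hfun]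
  have hgc : Continuous g := by
    apply continuous_finset_sum
    intro σ _
    have hpow : Continuous fun h : ℝ => h ^ (σ.support.card - 3) := by fun_prop
    have hp : Continuous fun h : ℝ => ∏ i ∈ σ.supportᶜ, (1 - h * L i i) :=
      continuous_finset_prod _ fun i _ => by fun_prop
    exact continuous_const.mul (((continuous_const.mul hpow).mul continuous_const).mul hp)
  have h1 : (fun h : ℝ => h ^ 3) =O[nhds (0 : ℝ)] fun h : ℝ => h ^ 3 := isBigO_refl _ _
  have h2 : g =O[nhds (0 : ℝ)] (fun _ : ℝ => (1 : ℝ)) :=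
    (hgc.tendsto 0).isBigO_one ℝ
  simpa using h1.mul h2
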